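/- Fix Heston-type parameters v > 0, κ > 0, θ > 0, ξ > 0, ρ ∈ (−1,1), ρ̄ := √(1−ρ²). For every t ≥ 0 and τ > 0, the function u ↦ Ξ(u,t,τ) is strictly convex on the open set K_{t,τ}, and it is essentially smooth on K_{t,τ}: for every sequence (u_n) in K_{t,τ} converging to a boundary point of K_{t,τ}, |∂_u Ξ(u_n,t,τ)| → ∞. -/

import Mathlib

open Filter Topology Set

/-- The limiting lmgf `Ξ(u, t, τ)` of the Heston diagonal small-maturity regime:
`Ξ(u,t,τ) = u v / (ξ(ρ̄ cot(ξ ρ̄ τ u / 2) − ρ) − ξ² t u / 2)` for `u ≠ 0`, `Ξ(0,t,τ) = 0`. -/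
noncomputable def Xi (v ξ ρ : ℝ) (u t τ : ℝ) : ℝ :=
  if u = 0 then 0
  else u * v / (ξ * (Real.sqrt (1 - ρ ^ 2) *
    Real.cot (ξ * Real.sqrt (1 - ρ ^ 2) * τ * u / 2) - ρ) - ξ ^ 2 * t * u / 2)

/-- Left endpoint `u₋(τ)` of the limiting domain. -/
noncomputable def uMinusK (ξ ρ τ : ℝ) : ℝ :=
  if ρ < 0 then 2 / (Real.sqrt (1 - ρ ^ 2) * ξ * τ) * Real.arctan (Real.sqrt (1 - ρ ^ 2) / ρ)
  else if ρ = 0 then -Real.pi / (ξ * τ)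
  else 2 / (Real.sqrt (1 - ρ ^ 2) * ξ * τ) * (Real.arctan (Real.sqrt (1 - ρ ^ 2) / ρ) - Real.pi)

/-- Right endpoint `u₊(τ)` of the limiting domain. -/
noncomputable def uPlusK (ξ ρ τ : ℝ) : ℝ :=
  if ρ < 0 then
    2 / (Real.sqrt (1 - ρ ^ 2) * ξ * τ) * (Real.arctan (Real.sqrt (1 - ρ ^ 2) / ρ) + Real.pi)
  else if ρ = 0 then Real.pi / (ξ * τ)
  else 2 / (Real.sqrt (1 - ρ ^ 2) * ξ * τ) * Real.arctan (Real.sqrt (1 - ρ ^ 2) / ρ)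

/-- The limiting domain `K_{t,τ} = {u ∈ (u₋(τ), u₊(τ)) : ξ² t Ξ(u,0,τ) < 2v}`. -/
noncomputable def Kdom (v ξ ρ t τ : ℝ) : Set ℝ :=
  {u ∈ Set.Ioo (uMinusK ξ ρ τ) (uPlusK ξ ρ τ) | ξ ^ 2 * t * Xi v ξ ρ u 0 τ < 2 * v}




noncomputable def XiD (ξ α a c : ℝ) : ℝ → ℝ :=
  fun u => ξ * Real.sin (α - a * u) - c * (u * Real.sin (a * u))

noncomputable def XiG (v ξ α a c : ℝ) : ℝ → ℝ :=
  fun u => v * (u * Real.sin (a * u)) / XiD ξ α a c u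

noncomputable def XiW (ξ α a : ℝ) : ℝ → ℝ :=
  fun u => ξ * (Real.sin (a * u) * Real.sin (α - a * u) + a * u * Real.sin α)

noncomputable def XiL1 (v ξ α a : ℝ) : ℝ → ℝ :=
  fun u => v * XiW ξ α a u / (XiD ξ α a 0 u) ^ 2

lemma hasDerivAt_au (a u : ℝ) : HasDerivAt (fun y : ℝ => a * y) a u := by
  simpa using (hasDerivAt_id u).const_mul a

lemma hasDerivAt_sin_au (a u : ℝ) :
    HasDerivAt (fun y : ℝ => Real.sin (a * y)) (a * Real.cos (a * u)) u := by
  exact ((Real.hasDerivAt_sin (a * u)).comp u (hasDerivAt_au a u)).congr_deriv (mul_comm _ _)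

lemma hasDerivAt_sin_sub (α a u : ℝ) :
    HasDerivAt (fun y : ℝ => Real.sin (α - a * y)) (-(a * Real.cos (α - a * u))) u := by
  have h1 : HasDerivAt (fun y : ℝ => α - a * y) (-a) u := by
    exact ((hasDerivAt_const u α).sub (hasDerivAt_au a u)).congr_deriv (zero_sub a)
  have := (Real.hasDerivAt_sin (α - a * u)).comp u h1
  exact this.congr_deriv (by ring)

lemma hasDerivAt_XiM (a u : ℝ) :
    HasDerivAt (fun y : ℝ => y * Real.sin (a * y))
      (Real.sin (a * u) + a * u * Real.cos (a * u)) u := by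
  have := (hasDerivAt_id u).mul (hasDerivAt_sin_au a u)
  refine this.congr_deriv ?_
  simp only [id_eq]
  ring

lemma hasDerivAt_XiD (ξ α a c u : ℝ) :
    HasDerivAt (XiD ξ α a c)
      (-(a * ξ * Real.cos (α - a * u)) - c * (Real.sin (a * u) + a * u * Real.cos (a * u))) u := by
  have h1 := (hasDerivAt_sin_sub α a u).const_mul ξ
  have h2 := (hasDerivAt_XiM a u).const_mul c
  have := h1.sub h2
  refine this.congr_deriv ?_
  ring

lemma hasDerivAt_XiW (ξ α a u : ℝ) :
    HasDerivAt (XiW ξ α a)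
      (ξ * (a * Real.cos (a * u) * Real.sin (α - a * u)
        - a * Real.sin (a * u) * Real.cos (α - a * u) + a * Real.sin α)) u := by
  have h1 := (hasDerivAt_sin_au a u).mul (hasDerivAt_sin_sub α a u)
  have h2 := ((hasDerivAt_au a u).const_mul (Real.sin α)).const_mul 1
  have h3 : HasDerivAt (fun y : ℝ => a * y * Real.sin α) (a * Real.sin α) u := by
    simpa [mul_comm, mul_assoc] using (hasDerivAt_au a u).mul_const (Real.sin α)
  have := (h1.add h3).const_mul ξ
  refine this.congr_deriv ?_
  ring

lemma hasDerivAt_XiG (v ξ α a c u : ℝ) (h : XiD ξ α a c u ≠ 0) :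
    HasDerivAt (XiG v ξ α a c) (v * XiW ξ α a u / (XiD ξ α a c u) ^ 2) u := by
  have hnum := (hasDerivAt_XiM a u).const_mul v
  have := hnum.div (hasDerivAt_XiD ξ α a c u) h
  refine this.congr_deriv ?_
  have hsa : Real.sin α
      = Real.sin (a * u) * Real.cos (α - a * u) + Real.cos (a * u) * Real.sin (α - a * u) := by
    rw [← Real.sin_add]; ring_nf
  rw [div_eq_div_iff (by positivity) (by positivity)]
  simp only [XiW, XiD]
  rw [hsa]
  ring

lemma hasDerivAt_XiL1 (v ξ α a u : ℝ) (hξ : ξ ≠ 0) (h : Real.sin (α - a * u) ≠ 0) :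
    HasDerivAt (XiL1 v ξ α a)
      (2 * v * a * ξ ^ 2 * Real.sin α
        * (Real.sin (α - a * u) + a * u * Real.cos (α - a * u))
        / (ξ * Real.sin (α - a * u)) ^ 3) u := by
  have hD : XiD ξ α a 0 u ≠ 0 := by
    simp only [XiD, zero_mul, sub_zero]
    exact mul_ne_zero hξ h
  have hnum := (hasDerivAt_XiW ξ α a u).const_mul v
  have hden := (hasDerivAt_XiD ξ α a 0 u).fun_pow 2
  have hden2 : (XiD ξ α a 0 u) ^ 2 ≠ 0 := pow_ne_zero 2 hD
  have := hnum.div hden hden2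
  refine this.congr_deriv ?_
  have hsa : Real.sin α
      = Real.sin (a * u) * Real.cos (α - a * u) + Real.cos (a * u) * Real.sin (α - a * u) := by
    rw [← Real.sin_add]; ring_nf
  have hD' : XiD ξ α a 0 u = ξ * Real.sin (α - a * u) := by simp [XiD]
  rw [div_eq_div_iff (by positivity) (by positivity)]
  simp only [XiD, XiW, zero_mul, sub_zero, mul_zero]
  rw [hsa]
  ring

lemma Hineq {α : ℝ} (hα0 : 0 < α) (hαπ : α < Real.pi) {s : ℝ} (hs0 : 0 < s)
    (hsπ : s < Real.pi) :
    Real.sin α ≤ Real.sin s + (α - s) * Real.cos s := by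
  set H : ℝ → ℝ := fun y => Real.sin y + (α - y) * Real.cos y with hHdef
  have hd : ∀ y, HasDerivAt H ((y - α) * Real.sin y) y := by
    intro y
    have h2 : HasDerivAt (fun y : ℝ => (α - y) * Real.cos y)
        ((0 - 1) * Real.cos y + (α - y) * (-Real.sin y)) y :=
      ((hasDerivAt_const y α).sub (hasDerivAt_id y)).mul (Real.hasDerivAt_cos y)
    have := (Real.hasDerivAt_sin y).add h2
    refine this.congr_deriv ?_
    ring
  have hcont : Continuous H := by
    have : Differentiable ℝ H := fun y => (hd y).differentiableAt
    exact this.continuous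
  have hHα : H α = Real.sin α := by simp [hHdef]
  rcases le_total s α with h | h
  · have hanti : AntitoneOn H (Icc 0 α) := by
      apply antitoneOn_of_deriv_nonpos (convex_Icc 0 α) hcont.continuousOn
      · exact fun y _ => (hd y).differentiableAt.differentiableWithinAt
      · intro y hy
        rw [interior_Icc] at hy
        rw [(hd y).deriv]
        apply mul_nonpos_of_nonpos_of_nonneg
        · linarith [hy.2]
        · exact Real.sin_nonneg_of_nonneg_of_le_pi hy.1.le (by linarith [hy.2, hαπ])
    have := hanti ⟨hs0.le, h⟩ ⟨hα0.le, le_refl α⟩ h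
    rw [hHα] at this
    exact this
  · have hmono : MonotoneOn H (Icc α Real.pi) := by
      apply monotoneOn_of_deriv_nonneg (convex_Icc α Real.pi) hcont.continuousOn
      · exact fun y _ => (hd y).differentiableAt.differentiableWithinAt
      · intro y hy
        rw [interior_Icc] at hy
        rw [(hd y).deriv]
        apply mul_nonneg
        · linarith [hy.1]
        · exact Real.sin_nonneg_of_nonneg_of_le_pi (by linarith [hy.1, hα0]) hy.2.le
    have := hmono ⟨le_refl α, hαπ.le⟩ ⟨h, hsπ.le⟩ h
    rw [hHα] at this
    exact this

lemma XiD_def (ξ α a c u : ℝ) :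
    XiD ξ α a c u = ξ * Real.sin (α - a * u) - c * (u * Real.sin (a * u)) := rfl

lemma XiG_def (v ξ α a c u : ℝ) :
    XiG v ξ α a c u = v * (u * Real.sin (a * u)) / XiD ξ α a c u := rfl

lemma XiW_def (ξ α a u : ℝ) :
    XiW ξ α a u = ξ * (Real.sin (a * u) * Real.sin (α - a * u) + a * u * Real.sin α) := rfl

lemma XiL1_def (v ξ α a u : ℝ) :
    XiL1 v ξ α a u = v * XiW ξ α a u / (XiD ξ α a 0 u) ^ 2 := rfl

lemma continuous_XiD (ξ α a c : ℝ) : Continuous (XiD ξ α a c) := by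
  unfold XiD; fun_prop

lemma continuous_XiW (ξ α a : ℝ) : Continuous (XiW ξ α a) := by
  unfold XiW; fun_prop

lemma continuousOn_XiG (v ξ α a c : ℝ) (s : Set ℝ) (h : ∀ u ∈ s, XiD ξ α a c u ≠ 0) :
    ContinuousOn (XiG v ξ α a c) s := by
  unfold XiG
  exact ContinuousOn.div (by fun_prop) (continuous_XiD ξ α a c).continuousOn h

lemma continuousOn_XiL1 (v ξ α a : ℝ) (s : Set ℝ) (h : ∀ u ∈ s, XiD ξ α a 0 u ≠ 0) :
    ContinuousOn (XiL1 v ξ α a) s := by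
  unfold XiL1
  exact ContinuousOn.div (continuous_const.mul (continuous_XiW ξ α a)).continuousOn
    (((continuous_XiD ξ α a 0).pow 2).continuousOn)
    (fun u hu => pow_ne_zero 2 (h u hu))

set_option maxHeartbeats 2000000 in
/-- Lemma 5.7 of the paper: for Heston-type parameters, for every `t ≥ 0`
and `τ > 0` the function `u ↦ Ξ(u,t,τ)` is strictly convex on the open set `K_{t,τ}` and is
essentially smooth there: `|∂_u Ξ(u_n,t,τ)| → ∞` along any sequence in `K_{t,τ}` converging
to a boundary point of `K_{t,τ}`. -/
theorem statement12 (v κ θ ξ ρ : ℝ) (hv : 0 < v) (hκ : 0 < κ) (hθ : 0 < θ) (hξ : 0 < ξ)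
    (hρ : ρ ∈ Set.Ioo (-1 : ℝ) 1) (t τ : ℝ) (ht : 0 ≤ t) (hτ : 0 < τ) :
    IsOpen (Kdom v ξ ρ t τ) ∧
      StrictConvexOn ℝ (Kdom v ξ ρ t τ) (fun u => Xi v ξ ρ u t τ) ∧
      ∀ x ∈ frontier (Kdom v ξ ρ t τ), ∀ un : ℕ → ℝ, (∀ n, un n ∈ Kdom v ξ ρ t τ) →
        Tendsto un atTop (𝓝 x) →
        Tendsto (fun n => |deriv (fun u => Xi v ξ ρ u t τ) (un n)|) atTop atTop := by
  obtain ⟨hρ1, hρ2⟩ := hρ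
  have hπ := Real.pi_pos
  set b := Real.sqrt (1 - ρ ^ 2) with hbdef
  have hb : 0 < b := Real.sqrt_pos.2 (by nlinarith)
  set α := Real.arccos ρ with hαdef
  have hα0 : 0 < α := Real.arccos_pos.2 hρ2
  have hαπ : α < Real.pi := by
    refine lt_of_le_of_ne (Real.arccos_le_pi ρ) (fun h => ?_)
    rw [hαdef] at h
    have := Real.arccos_eq_pi.1 h
    linarith
  have hcos : Real.cos α = ρ := Real.cos_arccos hρ1.le hρ2.le
  have hsin : Real.sin α = b := by rw [hαdef, Real.sin_arccos, hbdef]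
  have hsinpos' : 0 < Real.sin α := hsin ▸ hb
  set a := ξ * b * τ / 2 with hadef
  have ha : 0 < a := by positivity
  set um := (α - Real.pi) / a with humdef
  set up := α / a with hupdef
  have humneg : um < 0 := div_neg_of_neg_of_pos (by linarith) ha
  have huppos : 0 < up := div_pos hα0 ha
  set S := Ioo um up with hSdef
  have h0S : (0 : ℝ) ∈ S := ⟨humneg, huppos⟩
  have haum : a * um = α - Real.pi := by rw [humdef]; field_simp
  have haup : a * up = α := by rw [hupdef]; field_simp
  -- endpoints
  have harctan_neg : ρ < 0 → Real.arctan (b / ρ) = α - Real.pi := by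
    intro hρneg
    have hhalf : Real.pi / 2 < α := by
      by_contra h
      push_neg at h
      rw [hαdef] at h
      have := Real.arccos_le_pi_div_two.1 h
      linarith
    have htan : Real.tan (α - Real.pi) = b / ρ := by
      rw [Real.tan_sub_pi, Real.tan_eq_sin_div_cos, hsin, hcos]
    rw [← htan, Real.arctan_tan (by linarith) (by linarith)]
  have harctan_pos : 0 < ρ → Real.arctan (b / ρ) = α := by
    intro hρpos
    have hhalf : α < Real.pi / 2 := Real.arccos_lt_pi_div_two.2 hρpos
    have htan : Real.tan α = b / ρ := by
      rw [Real.tan_eq_sin_div_cos, hsin, hcos]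
    rw [← htan, Real.arctan_tan (by linarith) (by linarith)]
  have hminus : uMinusK ξ ρ τ = um := by
    rw [uMinusK.eq_def, ← hbdef, humdef, hadef]
    rcases lt_trichotomy ρ 0 with h | h | h
    · rw [if_pos h, harctan_neg h]
      field_simp
      try ring
    · have hα2 : α = Real.pi / 2 := by rw [hαdef, h, Real.arccos_zero]
      have hb1 : b = 1 := by rw [hbdef, h]; norm_num
      rw [if_neg (by rw [h]; exact lt_irrefl 0), if_pos h, hα2, hb1]
      field_simp
      try ring
    · rw [if_neg (by linarith), if_neg (by linarith), harctan_pos h]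
      field_simp
      try ring
  have hplus : uPlusK ξ ρ τ = up := by
    rw [uPlusK.eq_def, ← hbdef, hupdef, hadef]
    rcases lt_trichotomy ρ 0 with h | h | h
    · rw [if_pos h, harctan_neg h]
      field_simp
      try ring
    · have hα2 : α = Real.pi / 2 := by rw [hαdef, h, Real.arccos_zero]
      have hb1 : b = 1 := by rw [hbdef, h]; norm_num
      rw [if_neg (by rw [h]; exact lt_irrefl 0), if_pos h, hα2, hb1]
      field_simp
      try ring
    · rw [if_neg (by linarith), if_neg (by linarith), harctan_pos h]
      field_simp
      try ring
  have hau : ∀ u ∈ S, α - Real.pi < a * u ∧ a * u < α := by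
    intro u hu
    constructor
    · have := mul_lt_mul_of_pos_left hu.1 ha
      rwa [haum] at this
    · have := mul_lt_mul_of_pos_left hu.2 ha
      rwa [haup] at this
  have hsinpos : ∀ u ∈ S, 0 < Real.sin (α - a * u) := by
    intro u hu
    exact Real.sin_pos_of_pos_of_lt_pi (by linarith [(hau u hu).2]) (by linarith [(hau u hu).1])
  have hD0pos : ∀ u ∈ S, 0 < XiD ξ α a 0 u := by
    intro u hu
    rw [XiD_def]
    have := mul_pos hξ (hsinpos u hu)
    linarith
  have hsau_ne : ∀ u ∈ S, u ≠ 0 → Real.sin (a * u) ≠ 0 := by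
    intro u hu hu0
    have h1 := (hau u hu).1
    have h2 := (hau u hu).2
    intro h
    have h3 : a * u = 0 :=
      (Real.sin_eq_zero_iff_of_lt_of_lt (x := a * u) (by linarith) (by linarith)).1 h
    rcases mul_eq_zero.1 h3 with h' | h'
    · exact ha.ne' h'
    · exact hu0 h'
  have hrep : ∀ s : ℝ, ∀ u ∈ S, Xi v ξ ρ u s τ = XiG v ξ α a (ξ ^ 2 * s / 2) u := by
    intro s u hu
    by_cases hu0 : u = 0
    · subst hu0
      simp [Xi, XiG]
    · rw [Xi.eq_def, if_neg hu0]
      have hsne := hsau_ne u hu hu0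
      have harg : ξ * Real.sqrt (1 - ρ ^ 2) * τ * u / 2 = a * u := by
        rw [← hbdef, hadef]; ring
      rw [harg]
      have hsinsub : Real.sin (α - a * u) = b * Real.cos (a * u) - ρ * Real.sin (a * u) := by
        rw [Real.sin_sub, hsin, hcos]
      have hDraw : XiD ξ α a (ξ ^ 2 * s / 2) u
          = (ξ * (b * Real.cot (a * u) - ρ) - ξ ^ 2 * s * u / 2) * Real.sin (a * u) := by
        rw [XiD_def, hsinsub, Real.cot_eq_cos_div_sin]
        field_simp
      rw [XiG_def, hDraw, show v * (u * Real.sin (a * u)) = u * v * Real.sin (a * u) by ring,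
        mul_div_mul_right _ _ hsne]
  have hrep0 : ∀ u ∈ S, Xi v ξ ρ u 0 τ = XiG v ξ α a 0 u := by
    intro u hu
    rw [hrep 0 u hu, show ξ ^ 2 * (0 : ℝ) / 2 = 0 by ring]
  set Λ := XiG v ξ α a 0 with hΛdef
  have hK : Kdom v ξ ρ t τ = {u ∈ S | ξ ^ 2 * t * Λ u < 2 * v} := by
    rw [Kdom.eq_def, hminus, hplus]
    ext u
    constructor
    · rintro ⟨h1, h2⟩
      exact ⟨h1, by rwa [hrep0 u h1] at h2⟩
    · rintro ⟨h1, h2⟩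
      exact ⟨h1, by rwa [← hrep0 u h1] at h2⟩
  have hKS : ∀ u ∈ Kdom v ξ ρ t τ, u ∈ S := by
    intro u hu
    rw [hK] at hu
    exact hu.1
  have hcontΛ : ContinuousOn Λ S := continuousOn_XiG v ξ α a 0 S (fun u hu => (hD0pos u hu).ne')
  have hopen : IsOpen (Kdom v ξ ρ t τ) := by
    rw [hK]
    have hset : {u ∈ S | ξ ^ 2 * t * Λ u < 2 * v}
        = S ∩ (fun u => ξ ^ 2 * t * Λ u) ⁻¹' Iio (2 * v) := by
      ext u
      simp [Set.mem_sep_iff, Set.mem_preimage]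
    rw [hset]
    exact ContinuousOn.isOpen_inter_preimage (continuousOn_const.mul hcontΛ) isOpen_Ioo isOpen_Iio
  have hEpos : ∀ x ∈ S, 0 < 2 * v * a * ξ ^ 2 * Real.sin α
      * (Real.sin (α - a * x) + a * x * Real.cos (α - a * x))
      / (ξ * Real.sin (α - a * x)) ^ 3 := by
    intro x hx
    have hkey : Real.sin α ≤ Real.sin (α - a * x) + a * x * Real.cos (α - a * x) := by
      have h := Hineq hα0 hαπ (s := α - a * x) (by linarith [(hau x hx).2])
        (by linarith [(hau x hx).1])
      rw [show α - (α - a * x) = a * x by ring] at h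
      exact h
    apply div_pos
    · have h1 : 0 < Real.sin (α - a * x) + a * x * Real.cos (α - a * x) :=
        lt_of_lt_of_le hsinpos' hkey
      positivity
    · exact pow_pos (mul_pos hξ (hsinpos x hx)) 3
  have hderivΛ : ∀ y ∈ S, deriv Λ y = XiL1 v ξ α a y := by
    intro y hy
    rw [hΛdef]
    exact (hasDerivAt_XiG v ξ α a 0 y (hD0pos y hy).ne').deriv
  have hsc : StrictConvexOn ℝ S Λ := by
    apply strictConvexOn_of_deriv2_pos (convex_Ioo um up) (by rw [hSdef] at hcontΛ; exact hcontΛ)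
    intro x hx
    rw [interior_Ioo] at hx
    have hx' : x ∈ S := hx
    have hev : deriv Λ =ᶠ[𝓝 x] XiL1 v ξ α a :=
      Filter.eventuallyEq_of_mem (isOpen_Ioo.mem_nhds hx) (fun y hy => hderivΛ y hy)
    have h2 : deriv^[2] Λ x = deriv (XiL1 v ξ α a) x := by
      rw [Function.iterate_succ_apply, Function.iterate_one]
      exact hev.deriv_eq
    rw [h2, (hasDerivAt_XiL1 v ξ α a x hξ.ne' (hsinpos x hx').ne').deriv]
    exact hEpos x hx'
  have hmonoL1 : StrictMonoOn (XiL1 v ξ α a) S := by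
    apply strictMonoOn_of_deriv_pos (convex_Ioo um up)
      (by have := continuousOn_XiL1 v ξ α a S (fun u hu => (hD0pos u hu).ne')
          rw [hSdef] at this; exact this)
    intro x hx
    rw [interior_Ioo] at hx
    rw [(hasDerivAt_XiL1 v ξ α a x hξ.ne' (hsinpos x hx).ne').deriv]
    exact hEpos x hx
  have hL1zero : XiL1 v ξ α a 0 = 0 := by
    rw [XiL1_def, XiW_def]
    simp
  have hKconv : Convex ℝ (Kdom v ξ ρ t τ) := by
    rw [hK]
    have h1 : ConvexOn ℝ S (fun u => ξ ^ 2 * t * Λ u) := by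
      have h2 := (hsc.convexOn).smul (c := ξ ^ 2 * t) (by positivity)
      simpa [smul_eq_mul] using h2
    exact h1.convex_lt (2 * v)
  set c' := ξ ^ 2 * t / 2 with hc'def
  have hDtpos : ∀ u ∈ Kdom v ξ ρ t τ, 0 < XiD ξ α a c' u := by
    intro u hu
    rw [hK] at hu
    obtain ⟨huS, hlt⟩ := hu
    have hD := hD0pos u huS
    have hΛu : Λ u = v * (u * Real.sin (a * u)) / XiD ξ α a 0 u := rfl
    have h2 : ξ ^ 2 * t * Λ u * XiD ξ α a 0 u < 2 * v * XiD ξ α a 0 u :=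
      mul_lt_mul_of_pos_right hlt hD
    rw [hΛu, show ξ ^ 2 * t * (v * (u * Real.sin (a * u)) / XiD ξ α a 0 u) * XiD ξ α a 0 u
      = (ξ ^ 2 * t * (v * (u * Real.sin (a * u))) / XiD ξ α a 0 u) * XiD ξ α a 0 u by ring,
      div_mul_cancel₀ _ hD.ne'] at h2
    have h3 : 0 < 2 * v * (XiD ξ α a 0 u - c' * (u * Real.sin (a * u))) := by
      rw [hc'def]; linarith [h2]
    have h4 : XiD ξ α a c' u = XiD ξ α a 0 u - c' * (u * Real.sin (a * u)) := by
      rw [XiD_def, XiD_def]; ring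
    rw [h4]
    by_contra hcon
    push_neg at hcon
    have h5 : 2 * v * (XiD ξ α a 0 u - c' * (u * Real.sin (a * u))) ≤ 0 :=
      mul_nonpos_of_nonneg_of_nonpos (by positivity) hcon
    linarith
  set cc := ξ ^ 2 * t / (2 * v) with hccdef
  have hccnn : 0 ≤ cc := by rw [hccdef]; positivity
  have hccΛ : ∀ u ∈ Kdom v ξ ρ t τ, cc * Λ u < 1 := by
    intro u hu
    rw [hK] at hu
    have h1 : cc * Λ u = ξ ^ 2 * t * Λ u / (2 * v) := by rw [hccdef]; ring
    rw [h1, div_lt_one (by positivity)]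
    exact hu.2
  have hval : ∀ u ∈ Kdom v ξ ρ t τ, Xi v ξ ρ u t τ = Λ u / (1 - cc * Λ u) := by
    intro u hu
    have huS := hKS u hu
    have hD := (hD0pos u huS).ne'
    have hDt := (hDtpos u hu).ne'
    rw [hrep t u huS, ← hc'def]
    have hΛD : Λ u * XiD ξ α a 0 u = v * (u * Real.sin (a * u)) := by
      rw [hΛdef, XiG_def]
      exact div_mul_cancel₀ _ hD
    have e1 : 1 - cc * Λ u = XiD ξ α a c' u / XiD ξ α a 0 u := by
      rw [eq_div_iff hD, sub_mul, one_mul, mul_assoc, hΛD, XiD_def, XiD_def, hccdef, hc'def]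
      field_simp
      ring
    rw [e1, hΛdef, XiG_def, XiG_def, div_div_eq_mul_div, div_mul_cancel₀ _ hD]
  clear_value b α a um up S Λ c' cc
  have hSCXi : StrictConvexOn ℝ (Kdom v ξ ρ t τ) (fun u => Xi v ξ ρ u t τ) := by
    refine ⟨hKconv, ?_⟩
    intro x hx y hy hxy p q hp hq hpq
    simp only [smul_eq_mul]
    have hz : p * x + q * y ∈ Kdom v ξ ρ t τ := by
      have := hKconv hx hy hp.le hq.le hpq
      simpa [smul_eq_mul] using this
    have hΛz : Λ (p * x + q * y) < p * Λ x + q * Λ y := by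
      have := hsc.2 (hKS x hx) (hKS y hy) hxy hp hq hpq
      simpa [smul_eq_mul] using this
    have hP1 : cc * Λ x < 1 := hccΛ x hx
    have hQ1 : cc * Λ y < 1 := hccΛ y hy
    have hR1 : cc * Λ (p * x + q * y) < 1 := hccΛ _ hz
    have hS1 : cc * (p * Λ x + q * Λ y) < 1 := by nlinarith
    rw [hval x hx, hval y hy, hval _ hz]
    have hA : 0 < 1 - cc * Λ x := by linarith
    have hB : 0 < 1 - cc * Λ y := by linarith
    have hC : 0 < 1 - cc * (p * Λ x + q * Λ y) := by linarith
    have hR : 0 < 1 - cc * Λ (p * x + q * y) := by linarith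
    have step1 : Λ (p * x + q * y) / (1 - cc * Λ (p * x + q * y))
        < (p * Λ x + q * Λ y) / (1 - cc * (p * Λ x + q * Λ y)) := by
      rw [div_lt_div_iff₀ hR hC]
      nlinarith
    have step2 : (p * Λ x + q * Λ y) / (1 - cc * (p * Λ x + q * Λ y))
        ≤ p * (Λ x / (1 - cc * Λ x)) + q * (Λ y / (1 - cc * Λ y)) := by
      have hq' : q = 1 - p := by linarith
      subst hq'
      rw [mul_div_assoc', mul_div_assoc', div_add_div _ _ hA.ne' hB.ne',
        div_le_div_iff₀ hC (mul_pos hA hB)]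
      nlinarith [sq_nonneg (Λ x - Λ y), mul_pos hp hq,
        mul_nonneg (mul_nonneg (mul_pos hp hq).le hccnn) (sq_nonneg (Λ x - Λ y))]
    linarith
  refine ⟨hopen, hSCXi, ?_⟩
  intro x hx un hun hlim
  have hxcl : x ∈ closure (Kdom v ξ ρ t τ) := frontier_subset_closure hx
  have hxnot : x ∉ Kdom v ξ ρ t τ := by
    rw [hopen.frontier_eq] at hx
    exact hx.2
  have hxIcc : x ∈ Icc um up := by
    have hsub : closure (Kdom v ξ ρ t τ) ⊆ Icc um up := by
      apply closure_minimal _ isClosed_Icc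
      intro u hu
      rw [hSdef] at hKS
      exact Ioo_subset_Icc_self (hKS u hu)
    exact hsub hxcl
  have hcontDt : Continuous (XiD ξ α a c') := continuous_XiD ξ α a c'
  have hDtlim : Tendsto (fun n => XiD ξ α a c' (un n)) atTop (𝓝 (XiD ξ α a c' x)) :=
    (hcontDt.tendsto x).comp hlim
  have hDtx_nonneg : 0 ≤ XiD ξ α a c' x :=
    ge_of_tendsto hDtlim (Eventually.of_forall fun n => (hDtpos _ (hun n)).le)
  have hc'nn : 0 ≤ c' := by rw [hc'def]; positivity
  have hkey : XiD ξ α a c' x = 0 ∧ XiW ξ α a x ≠ 0 := by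
    rcases eq_or_lt_of_le hxIcc.1 with h1 | h1
    · -- x = um
      subst h1
      have hsin1 : Real.sin (α - a * um) = 0 := by
        rw [show α - a * um = Real.pi by rw [haum]; ring, Real.sin_pi]
      have hsin2 : Real.sin (a * um) = -Real.sin α := by
        rw [haum, Real.sin_sub, Real.sin_pi, Real.cos_pi]
        ring
      have hDt0 : XiD ξ α a c' um = 0 := by
        refine le_antisymm ?_ hDtx_nonneg
        rw [XiD_def, hsin1, hsin2, show ξ * 0 - c' * (um * -Real.sin α)
          = c' * um * Real.sin α by ring]
        exact mul_nonpos_of_nonpos_of_nonneg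
          (mul_nonpos_of_nonneg_of_nonpos hc'nn humneg.le) hsinpos'.le
      refine ⟨hDt0, ?_⟩
      have hW : XiW ξ α a um = ξ * ((α - Real.pi) * Real.sin α) := by
        rw [XiW_def, hsin1, haum]
        ring
      rw [hW]
      exact (mul_neg_of_pos_of_neg hξ
        (mul_neg_of_neg_of_pos (by linarith) hsinpos')).ne
    · rcases eq_or_lt_of_le hxIcc.2 with h2 | h2
      · -- x = x
        subst h2
        have hsin1 : Real.sin (α - a * x) = 0 := by
          rw [show α - a * x = 0 by rw [haup]; ring, Real.sin_zero]
        have hsin2 : Real.sin (a * x) = Real.sin α := by rw [haup]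
        have hDt0 : XiD ξ α a c' x = 0 := by
          refine le_antisymm ?_ hDtx_nonneg
          rw [XiD_def, hsin1, hsin2, show ξ * 0 - c' * (x * Real.sin α)
            = -(c' * x * Real.sin α) by ring]
          exact neg_nonpos_of_nonneg
            (mul_nonneg (mul_nonneg hc'nn huppos.le) hsinpos'.le)
        refine ⟨hDt0, ?_⟩
        have hW : XiW ξ α a x = ξ * (α * Real.sin α) := by
          rw [XiW_def, hsin1, haup]
          ring
        rw [hW]
        exact (mul_pos hξ (mul_pos hα0 hsinpos')).ne'
      · -- x interior
        have hxS : x ∈ S := by rw [hSdef]; exact ⟨h1, h2⟩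
        have hge : 2 * v ≤ ξ ^ 2 * t * Λ x := by
          by_contra hlt
          push_neg at hlt
          exact hxnot (by rw [hK]; exact ⟨hxS, hlt⟩)
        have hx0 : x ≠ 0 := by
          intro h0
          have hΛ0 : Λ x = 0 := by
            rw [h0, hΛdef, XiG_def]
            simp
          rw [hΛ0] at hge
          nlinarith
        have hD := hD0pos x hxS
        have hΛx : Λ x = v * (x * Real.sin (a * x)) / XiD ξ α a 0 x := by
          rw [hΛdef, XiG_def]
        have h2' : 2 * v * XiD ξ α a 0 x ≤ ξ ^ 2 * t * Λ x * XiD ξ α a 0 x :=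
          mul_le_mul_of_nonneg_right hge hD.le
        rw [hΛx, show ξ ^ 2 * t * (v * (x * Real.sin (a * x)) / XiD ξ α a 0 x) * XiD ξ α a 0 x
          = (ξ ^ 2 * t * (v * (x * Real.sin (a * x))) / XiD ξ α a 0 x) * XiD ξ α a 0 x by ring,
          div_mul_cancel₀ _ hD.ne'] at h2'
        have h3 : 2 * v * (XiD ξ α a 0 x - c' * (x * Real.sin (a * x))) ≤ 0 := by
          rw [hc'def]
          linarith
        have h4 : XiD ξ α a c' x = XiD ξ α a 0 x - c' * (x * Real.sin (a * x)) := by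
          rw [XiD_def, XiD_def]
          ring
        have hDtx0 : XiD ξ α a c' x = 0 := by
          refine le_antisymm ?_ hDtx_nonneg
          rw [h4]
          nlinarith
        refine ⟨hDtx0, fun hW0 => ?_⟩
        have hL1x : XiL1 v ξ α a x = 0 := by
          rw [XiL1_def, hW0]
          simp
        rcases lt_or_gt_of_ne hx0 with hneg | hpos
        · have hlt := hmonoL1 hxS h0S hneg
          rw [hL1zero, hL1x] at hlt
          exact lt_irrefl 0 hlt
        · have hlt := hmonoL1 h0S hxS hpos
          rw [hL1zero, hL1x] at hlt
          exact lt_irrefl 0 hlt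
  obtain ⟨hDtx, hWx⟩ := hkey
  have hderiv_eq : ∀ n, deriv (fun u => Xi v ξ ρ u t τ) (un n)
      = v * XiW ξ α a (un n) / (XiD ξ α a c' (un n)) ^ 2 := by
    intro n
    have hS' := hKS _ (hun n)
    have hev : (fun u => Xi v ξ ρ u t τ) =ᶠ[𝓝 (un n)] XiG v ξ α a c' := by
      rw [hSdef] at hS'
      refine Filter.eventuallyEq_of_mem (isOpen_Ioo.mem_nhds hS') (fun y hy => ?_)
      rw [hrep t y (by rw [hSdef]; exact hy), hc'def]
    rw [hev.deriv_eq]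
    exact (hasDerivAt_XiG v ξ α a c' (un n) (hDtpos _ (hun n)).ne').deriv
  have habs : ∀ n, |deriv (fun u => Xi v ξ ρ u t τ) (un n)|
      = |v * XiW ξ α a (un n)| / (XiD ξ α a c' (un n)) ^ 2 := by
    intro n
    rw [hderiv_eq n, abs_div, abs_of_nonneg (sq_nonneg (XiD ξ α a c' (un n)))]
  simp only [habs]
  have hnum : Tendsto (fun n => |v * XiW ξ α a (un n)|) atTop (𝓝 |v * XiW ξ α a x|) := by
    have hc : Continuous fun u => |v * XiW ξ α a u| :=
      (continuous_const.mul (continuous_XiW ξ α a)).abs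
    exact (hc.tendsto x).comp hlim
  have hnum_pos : 0 < |v * XiW ξ α a x| := abs_pos.2 (mul_ne_zero hv.ne' hWx)
  have hden : Tendsto (fun n => (XiD ξ α a c' (un n)) ^ 2) atTop (𝓝[>] 0) := by
    apply tendsto_nhdsWithin_of_tendsto_nhds_of_eventually_within
    · have h1 : Tendsto (fun n => (XiD ξ α a c' (un n)) ^ 2) atTop (𝓝 ((XiD ξ α a c' x) ^ 2)) :=
        ((hcontDt.pow 2).tendsto x).comp hlim
      rwa [hDtx, show (0 : ℝ) ^ 2 = 0 by norm_num] at h1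
    · exact Eventually.of_forall fun n => pow_pos (hDtpos _ (hun n)) 2
  have hinv : Tendsto (fun n => ((XiD ξ α a c' (un n)) ^ 2)⁻¹) atTop atTop :=
    tendsto_inv_nhdsGT_zero.comp hden
  have hfinal := Filter.Tendsto.pos_mul_atTop hnum_pos hnum hinv
  refine hfinal.congr (fun n => ?_)
  rw [div_eq_mul_inv]
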